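/- For a reflection w (i.e., w conjugate in W to some s ∈ S), the set {t reflection : tw < w} has cardinality ℓ(w) for every w ∈ W, and for s ∈ S one has the identity {t reflection : tw < w} = {s} ∪ {s t s : t reflection, t(sw) < sw} whenever sw < w. -/

import Mathlib

namespace Statement14Aux

open CoxeterSystem List

attribute [local instance] Classical.propDecidable

variable {B W : Type} [Group W] {M : CoxeterMatrix B} (cs : CoxeterSystem M W)

theorem prod_map_alternatingWord {G : Type*} [Monoid G] (f : B → G) (i j : B) (m : ℕ) :
    ((alternatingWord i j m).map f).prod =
      (if Even m then 1 else f j) * (f i * f j) ^ (m / 2) := by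
  induction m with
  | zero => simp [alternatingWord]
  | succ m ih =>
    rw [alternatingWord_succ', List.map_cons, List.prod_cons, ih]
    by_cases hm : Even m
    · have h₁ : ¬ Even (m + 1) := by simp [hm, Nat.even_add_one]
      have h₂ : (m + 1) / 2 = m / 2 := by
        have := Nat.even_iff.mp hm; omega
      simp [hm, h₁, h₂]
    · have h₁ : Even (m + 1) := by simp [hm, Nat.even_add_one]
      have h₂ : (m + 1) / 2 = m / 2 + 1 := by
        rcases Nat.odd_iff.mp (Nat.not_even_iff_odd.mp hm) with h; omega
      simp [hm, h₁, h₂, ← pow_succ', ← mul_assoc]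

theorem simple_conj_conj (i : B) (t : W) :
    cs.simple i * (cs.simple i * t * cs.simple i) * cs.simple i = t := by
  simp [mul_assoc, cs.simple_mul_simple_cancel_left, cs.simple_mul_simple_self]

theorem conj_simple_eq_simple_iff (i : B) (t : W) :
    cs.simple i * t * cs.simple i = cs.simple i ↔ t = cs.simple i := by
  constructor
  · intro h
    have := congrArg (fun x => cs.simple i * x * cs.simple i) h
    rw [simple_conj_conj] at this
    rw [this]
    simp [mul_assoc, cs.simple_mul_simple_self]
  · intro h
    rw [h]
    simp [mul_assoc, cs.simple_mul_simple_self]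

noncomputable def permAux (i : B) : W × ZMod 2 → W × ZMod 2 :=
  fun p => (cs.simple i * p.1 * cs.simple i, p.2 + if p.1 = cs.simple i then 1 else 0)

theorem permAux_involutive (i : B) : Function.Involutive (permAux cs i) := by
  rintro ⟨t, z⟩
  simp only [permAux]
  have h11 : (1 : ZMod 2) + 1 = 0 := rfl
  refine Prod.ext (simple_conj_conj cs i t) ?_
  simp only
  by_cases ht : t = cs.simple i
  · simp only [conj_simple_eq_simple_iff, if_pos ht, if_pos ((conj_simple_eq_simple_iff cs i t).mpr ht), add_assoc, h11, add_zero]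
  · simp only [conj_simple_eq_simple_iff, if_neg ht, if_neg (fun h => ht ((conj_simple_eq_simple_iff cs i t).mp h)), add_zero,
      add_zero]

noncomputable def perm (i : B) : Equiv.Perm (W × ZMod 2) :=
  Function.Involutive.toPerm _ (permAux_involutive cs i)

theorem perm_apply (i : B) (p : W × ZMod 2) :
    perm cs i p = (cs.simple i * p.1 * cs.simple i,
      p.2 + if p.1 = cs.simple i then 1 else 0) := rfl

theorem ris_cons (i : B) (ω : List B) :
    cs.rightInvSeq (i :: ω) =
      ((cs.wordProd ω)⁻¹ * cs.simple i * cs.wordProd ω) :: cs.rightInvSeq ω := rfl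

theorem prod_map_perm (ω : List B) (t : W) (z : ZMod 2) :
    ((ω.map (perm cs)).prod) (t, z) =
      (cs.wordProd ω * t * (cs.wordProd ω)⁻¹,
       z + (List.count t (cs.rightInvSeq ω) : ZMod 2)) := by
  induction ω with
  | nil => simp
  | cons i ω ih =>
    rw [List.map_cons, List.prod_cons, Equiv.Perm.mul_apply, ih, perm_apply]
    have hcond : (cs.wordProd ω * t * (cs.wordProd ω)⁻¹ = cs.simple i) ↔
        ((cs.wordProd ω)⁻¹ * cs.simple i * cs.wordProd ω = t) := by
      constructor
      · intro h; rw [← h]; group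
      · intro h; rw [← h]; group
    refine Prod.ext ?_ ?_
    · simp only [cs.wordProd_cons, mul_inv_rev, cs.inv_simple]
      group
    · simp only [ris_cons, List.count_cons]
      have hbeq : ((cs.wordProd ω)⁻¹ * cs.simple i * cs.wordProd ω == t) =
          decide ((cs.wordProd ω)⁻¹ * cs.simple i * cs.wordProd ω = t) := rfl
      by_cases h : (cs.wordProd ω)⁻¹ * cs.simple i * cs.wordProd ω = t
      · rw [if_pos (hcond.mpr h)]
        simp [h, add_assoc, add_comm]
      · rw [if_neg (fun hc => h (hcond.mp hc))]
        simp [h, hbeq]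

/-- The dihedral conjugates appearing in inversion sequences of alternating words. -/
noncomputable def vv (i j : B) (d : ℕ) : W :=
  ((cs.simple i * cs.simple j) ^ ((d + 1) / 2))⁻¹ * cs.simple j *
    (cs.simple i * cs.simple j) ^ (d / 2)

theorem conj_prod_alt (i j : B) (n : ℕ) :
    (cs.wordProd (alternatingWord i j n))⁻¹ * cs.simple (if Even n then j else i) *
      cs.wordProd (alternatingWord i j n) = vv cs i j n := by
  rcases Nat.even_or_odd n with h | h
  · have h2 : (n + 1) / 2 = n / 2 := by rcases Nat.even_iff.mp h with h'; omega
    rw [if_pos h, cs.prod_alternatingWord_eq_mul_pow, if_pos h, vv, h2, one_mul]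
  · have hne : ¬ Even n := Nat.not_even_iff_odd.mpr h
    have h2 : (n + 1) / 2 = n / 2 + 1 := by rcases Nat.odd_iff.mp h with h'; omega
    rw [if_neg hne, cs.prod_alternatingWord_eq_mul_pow, if_neg hne, vv, h2]
    set a := cs.simple i with hadef
    set b := cs.simple j with hbdef
    set p := a * b with hp
    set k := n / 2 with hk
    have hb : (b * p ^ k)⁻¹ = (p ^ k)⁻¹ * b := by rw [mul_inv_rev, hbdef, cs.inv_simple]
    have hkey : p⁻¹ * b = b * a * b := by
      rw [hp, mul_inv_rev, hadef, hbdef, cs.inv_simple, cs.inv_simple]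
    have hpk : (p ^ (k + 1))⁻¹ = (p ^ k)⁻¹ * p⁻¹ := by rw [← mul_inv_rev, ← pow_succ']
    rw [hb, hpk]
    calc (p ^ k)⁻¹ * b * a * (b * p ^ k)
        = (p ^ k)⁻¹ * ((b * a * b) * p ^ k) := by group
      _ = (p ^ k)⁻¹ * ((p⁻¹ * b) * p ^ k) := by rw [hkey]
      _ = (p ^ k)⁻¹ * p⁻¹ * b * p ^ k := by group

theorem vv_add (i j : B) (d : ℕ) : vv cs i j (d + M i j) = vv cs i j d := by
  set p := cs.simple i * cs.simple j with hp
  set m := M i j with hm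
  have hpm : p ^ m = 1 := cs.simple_mul_simple_pow i j
  obtain ⟨α, β, hα, hβ, hαβ⟩ : ∃ α β, (d + m + 1) / 2 = (d + 1) / 2 + α ∧
      (d + m) / 2 = d / 2 + β ∧ α + β = m := by
    refine ⟨(d + m + 1) / 2 - (d + 1) / 2, (d + m) / 2 - d / 2, ?_, ?_, ?_⟩ <;> omega
  have hbase : cs.simple j * p * cs.simple j = p⁻¹ := by
    rw [hp, mul_inv_rev, cs.inv_simple, cs.inv_simple]
    simp [mul_assoc, cs.simple_mul_simple_self]
  have hconj : ∀ k : ℕ, cs.simple j * p ^ k * cs.simple j = (p ^ k)⁻¹ := by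
    intro k
    induction k with
    | zero => simp [cs.simple_mul_simple_self]
    | succ k ih =>
      conv_lhs => rw [pow_succ]
      calc cs.simple j * (p ^ k * p) * cs.simple j
          = (cs.simple j * p ^ k * cs.simple j) * (cs.simple j * p * cs.simple j) := by
            simp [mul_assoc, cs.simple_mul_simple_cancel_left]
        _ = (p ^ k)⁻¹ * p⁻¹ := by rw [ih, hbase]
        _ = (p ^ (k + 1))⁻¹ := by rw [← mul_inv_rev, ← pow_succ']
  have hsw : cs.simple j * p ^ β = (p ^ β)⁻¹ * cs.simple j := by
    rw [← hconj β]
    simp [mul_assoc, cs.simple_mul_simple_self]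
  have key : (p ^ α)⁻¹ * (cs.simple j * p ^ β) = cs.simple j := by
    rw [hsw, ← mul_assoc, ← mul_inv_rev, ← pow_add]
    rw [show β + α = m from by omega, hpm, inv_one, one_mul]
  show (p ^ ((d + m + 1) / 2))⁻¹ * cs.simple j * p ^ ((d + m) / 2)
      = (p ^ ((d + 1) / 2))⁻¹ * cs.simple j * p ^ (d / 2)
  rw [hα, hβ, pow_add, pow_add, mul_inv_rev]
  have hc : (p ^ α)⁻¹ * (p ^ ((d + 1) / 2))⁻¹ = (p ^ ((d + 1) / 2))⁻¹ * (p ^ α)⁻¹ := by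
    rw [← mul_inv_rev, ← mul_inv_rev, ← pow_add, ← pow_add, Nat.add_comm]
  rw [hc]
  calc (p ^ ((d + 1) / 2))⁻¹ * (p ^ α)⁻¹ * cs.simple j * (p ^ (d / 2) * p ^ β)
      = (p ^ ((d + 1) / 2))⁻¹ * ((p ^ α)⁻¹ * (cs.simple j * (p ^ β * p ^ (d / 2)))) := by
        rw [show p ^ (d / 2) * p ^ β = p ^ β * p ^ (d / 2) from by
          rw [← pow_add, ← pow_add, Nat.add_comm]]
        group
    _ = (p ^ ((d + 1) / 2))⁻¹ * cs.simple j * p ^ (d / 2) := by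
        rw [show (p ^ α)⁻¹ * (cs.simple j * (p ^ β * p ^ (d / 2)))
            = ((p ^ α)⁻¹ * (cs.simple j * p ^ β)) * p ^ (d / 2) from by group, key]
        rw [mul_assoc]

theorem getD_ris_alt (i j : B) : ∀ n, ∀ k < n,
    (cs.rightInvSeq (alternatingWord i j n)).getD k 1 = vv cs i j (n - 1 - k) := by
  intro n
  induction n with
  | zero => omega
  | succ n ih =>
    intro k hk
    rw [alternatingWord_succ', ris_cons]
    cases k with
    | zero =>
      rw [List.getD_cons_zero]
      have := conj_prod_alt cs i j n
      simpa using this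
    | succ k =>
      rw [List.getD_cons_succ, ih k (by omega)]
      congr 1
      omega

theorem count_ris_alt_even (i j : B) (t : W) :
    Even (List.count t (cs.rightInvSeq (alternatingWord i j (2 * M i j)))) := by
  set m := M i j with hm
  set L := cs.rightInvSeq (alternatingWord i j (2 * m)) with hL
  have hlen : L.length = 2 * m := by
    rw [hL, cs.length_rightInvSeq, length_alternatingWord]
  have htd : L.take m = L.drop m := by
    apply List.ext_getElem
    · rw [List.length_take, List.length_drop, hlen]; omega
    · intro k h1 h2
      have hk : k < m := by rw [List.length_take, hlen] at h1; omega
      have e1 : L[k]'(by omega) = vv cs i j (2 * m - 1 - k) := by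
        rw [← List.getD_eq_getElem L 1 (by omega), hL]
        exact getD_ris_alt cs i j (2 * m) k (by omega)
      have e2 : L[m + k]'(by omega) = vv cs i j (2 * m - 1 - (m + k)) := by
        rw [← List.getD_eq_getElem L 1 (by omega), hL]
        exact getD_ris_alt cs i j (2 * m) (m + k) (by omega)
      rw [List.getElem_take, List.getElem_drop, e1, e2]
      rw [show 2 * m - 1 - k = (2 * m - 1 - (m + k)) + m from by omega]
      exact vv_add cs i j _
  have hsplit : List.count t L = List.count t (L.take m) + List.count t (L.drop m) := by
    conv_lhs => rw [← List.take_append_drop m L]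
    rw [List.count_append]
  rw [hsplit, htd]
  exact ⟨List.count t (L.drop m), by omega⟩

theorem isLiftable : M.IsLiftable (perm cs) := by
  intro i j
  have h2 : ((alternatingWord i j (2 * M i j)).map (perm cs)).prod
      = (perm cs i * perm cs j) ^ (M i j) := by
    rw [prod_map_alternatingWord]
    rw [if_pos (even_two_mul (M i j)), one_mul, show 2 * M i j / 2 = M i j from by omega]
  rw [← h2]
  apply Equiv.ext
  rintro ⟨t, z⟩
  rw [prod_map_perm]
  have hπ : cs.wordProd (alternatingWord i j (2 * M i j)) = 1 := by
    rw [cs.prod_alternatingWord_eq_mul_pow, if_pos (even_two_mul (M i j)), one_mul,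
      show 2 * M i j / 2 = M i j from by omega, cs.simple_mul_simple_pow]
  obtain ⟨c, hc⟩ := count_ris_alt_even cs i j t
  have hzero : ((List.count t (cs.rightInvSeq (alternatingWord i j (2 * M i j))) : ℕ) : ZMod 2)
      = 0 := by
    rw [hc]
    have : ((c + c : ℕ) : ZMod 2) = (c : ZMod 2) + (c : ZMod 2) := by push_cast; ring
    rw [this, CharTwo.add_self_eq_zero]
  rw [hπ, hzero]
  simp

noncomputable def F : W →* Equiv.Perm (W × ZMod 2) :=
  CoxeterSystem.lift cs ⟨perm cs, isLiftable cs⟩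

theorem F_simple (i : B) : F cs (cs.simple i) = perm cs i :=
  cs.lift_apply_simple (isLiftable cs) i

theorem F_wordProd (ω : List B) : F cs (cs.wordProd ω) = (ω.map (perm cs)).prod := by
  rw [CoxeterSystem.wordProd, map_list_prod, List.map_map]
  congr 1
  apply List.map_congr_left
  intro a _
  exact F_simple cs a

noncomputable def eta (w t : W) : ZMod 2 := ((F cs w) (t, 0)).2

theorem eta_wordProd (ω : List B) (t : W) :
    eta cs (cs.wordProd ω) t = (List.count t (cs.rightInvSeq ω) : ZMod 2) := by
  rw [eta, F_wordProd, prod_map_perm, zero_add]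

theorem F_apply (w t : W) (z : ZMod 2) :
    (F cs w) (t, z) = (w * t * w⁻¹, z + eta cs w t) := by
  obtain ⟨ω, rfl⟩ := cs.wordProd_surjective w
  rw [F_wordProd, prod_map_perm, eta_wordProd]

theorem eta_mul (u v t : W) :
    eta cs (u * v) t = eta cs u (v * t * v⁻¹) + eta cs v t := by
  rw [eta, map_mul, Equiv.Perm.mul_apply, F_apply, F_apply, zero_add, add_comm]

theorem eta_one (t : W) : eta cs 1 t = 0 := by
  rw [eta, map_one]; rfl

theorem eta_inv (w t : W) : eta cs w⁻¹ t = eta cs w (w⁻¹ * t * w) := by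
  have h := eta_mul cs w w⁻¹ t
  rw [mul_inv_cancel, eta_one, inv_inv] at h
  have h2 := eq_neg_of_add_eq_zero_left h.symm
  rw [h2, CharTwo.neg_eq]

theorem eta_simple (i : B) (t : W) :
    eta cs (cs.simple i) t = if t = cs.simple i then 1 else 0 := by
  have h : cs.simple i = cs.wordProd [i] := by simp
  rw [h, eta_wordProd]
  by_cases ht : t = cs.simple i <;> simp [ht, List.count_singleton, eq_comm]

theorem eta_self {t : W} (ht : cs.IsReflection t) : eta cs t t = 1 := by
  obtain ⟨x, i, rfl⟩ := ht
  set t := x * cs.simple i * x⁻¹ with hdef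
  have h1 : eta cs t t = eta cs (x * cs.simple i) (x⁻¹ * t * (x⁻¹)⁻¹) + eta cs x⁻¹ t := by
    rw [show t = (x * cs.simple i) * x⁻¹ from by rw [hdef], ← eta_mul]
  have h2 : x⁻¹ * t * (x⁻¹)⁻¹ = cs.simple i := by
    rw [hdef]; group
  have h3 : eta cs (x * cs.simple i) (cs.simple i)
      = eta cs x (cs.simple i * cs.simple i * (cs.simple i)⁻¹) + eta cs (cs.simple i) (cs.simple i) := by
    rw [← eta_mul]
  have h4 : cs.simple i * cs.simple i * (cs.simple i)⁻¹ = cs.simple i := by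
    rw [cs.simple_mul_simple_self, one_mul, cs.inv_simple]
  have h5 : eta cs x⁻¹ t = eta cs x (cs.simple i) := by
    rw [eta_inv, show x⁻¹ * t * x = cs.simple i from by rw [hdef]; group]
  rw [h1, h2, h3, h4, h5, eta_simple, if_pos rfl]
  have : ∀ a : ZMod 2, a + 1 + a = 1 := by decide
  exact this _

theorem lt_of_eta_eq_one {t : W} (w : W) (h : eta cs w t = 1) :
    cs.length (w * t) < cs.length w := by
  obtain ⟨ω, hred, rfl⟩ := cs.exists_reduced_word' w
  rw [eta_wordProd] at h
  have hmem : t ∈ cs.rightInvSeq ω := by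
    by_contra hmem
    rw [List.count_eq_zero_of_not_mem hmem] at h
    exact absurd h (by decide)
  exact (cs.isRightInversion_of_mem_rightInvSeq hred hmem).2

theorem eta_eq_one_iff {t : W} (ht : cs.IsReflection t) (w : W) :
    eta cs w t = 1 ↔ cs.length (w * t) < cs.length w := by
  constructor
  · exact lt_of_eta_eq_one cs w
  · intro h
    by_contra hne
    have h0 : eta cs w t = 0 := by
      have : ∀ a : ZMod 2, a ≠ 1 → a = 0 := by decide
      exact this _ hne
    have h1 : eta cs (w * t) t = 1 := by
      rw [eta_mul, show t * t * t⁻¹ = t from by rw [ht.mul_self, one_mul, ht.inv], h0, eta_self cs ht,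
        zero_add]
    have h2 := lt_of_eta_eq_one cs (w * t) h1
    rw [mul_assoc, ht.mul_self, mul_one] at h2
    omega

theorem mem_ris_iff {ω : List B} (hred : cs.IsReduced ω) {t : W} :
    t ∈ cs.rightInvSeq ω ↔ cs.IsRightInversion (cs.wordProd ω) t := by
  constructor
  · exact cs.isRightInversion_of_mem_rightInvSeq hred
  · rintro ⟨ht, hlt⟩
    have h1 : eta cs (cs.wordProd ω) t = 1 := (eta_eq_one_iff cs ht _).mpr hlt
    rw [eta_wordProd] at h1
    by_contra hmem
    rw [List.count_eq_zero_of_not_mem hmem] at h1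
    exact absurd h1 (by decide)

theorem isLeftInversion_iff_eta {t : W} (ht : cs.IsReflection t) (w : W) :
    cs.IsLeftInversion w t ↔ eta cs w⁻¹ t = 1 := by
  rw [← cs.isRightInversion_inv_iff]
  constructor
  · rintro ⟨_, h⟩
    exact (eta_eq_one_iff cs ht w⁻¹).mpr h
  · intro h
    exact ⟨ht, (eta_eq_one_iff cs ht w⁻¹).mp h⟩

end Statement14Aux

open Statement14Aux

/-- For every `w ∈ W`, the set `{t reflection : ℓ(tw) < ℓ(w)}` of left
inversions of `w` is finite of cardinality `ℓ(w)`; and for `s ∈ S` with `sw < w` one has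
`{t : tw < w} = {s} ∪ {sts : t reflection, t(sw) < sw}`. -/
theorem statement14 {B W : Type} [Group W] {M : CoxeterMatrix B} (cs : CoxeterSystem M W) :
    (∀ w : W, {t : W | cs.IsLeftInversion w t}.Finite ∧
        {t : W | cs.IsLeftInversion w t}.ncard = cs.length w) ∧
      (∀ (i : B) (w : W), cs.length (cs.simple i * w) < cs.length w →
        {t : W | cs.IsLeftInversion w t} =
          insert (cs.simple i)
            ((fun t => cs.simple i * t * cs.simple i) ''
              {t : W | cs.IsLeftInversion (cs.simple i * w) t})) := by
  classical
  constructor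
  · intro w
    obtain ⟨ω, hred, hw⟩ := cs.exists_reduced_word' w⁻¹
    have hset : {t : W | cs.IsLeftInversion w t} = ↑(cs.rightInvSeq ω).toFinset := by
      ext t
      rw [List.coe_toFinset]
      simp only [Set.mem_setOf_eq]
      rw [mem_ris_iff cs hred, ← hw, cs.isRightInversion_inv_iff]
    constructor
    · rw [hset]; exact (cs.rightInvSeq ω).toFinset.finite_toSet
    · rw [hset, Set.ncard_coe_finset, List.toFinset_card_of_nodup hred.nodup_rightInvSeq,
        cs.length_rightInvSeq]
      have : cs.length (cs.wordProd ω) = ω.length := hred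
      rw [← hw, cs.length_inv] at this
      omega
  · intro i w hlen
    ext t
    simp only [Set.mem_setOf_eq, Set.mem_insert_iff, Set.mem_image]
    constructor
    · intro htw
      have ht := htw.1
      by_cases hts : t = cs.simple i
      · exact Or.inl hts
      · right
        have hrefl : cs.IsReflection (cs.simple i * t * cs.simple i) := by
          have := ht.conj (cs.simple i)
          rwa [cs.inv_simple] at this
        refine ⟨cs.simple i * t * cs.simple i, ?_, simple_conj_conj cs i t⟩
        rw [isLeftInversion_iff_eta cs hrefl,
          show (cs.simple i * w)⁻¹ = w⁻¹ * cs.simple i from by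
            rw [mul_inv_rev, cs.inv_simple],
          eta_mul,
          show cs.simple i * (cs.simple i * t * cs.simple i) * (cs.simple i)⁻¹ = t from by
            rw [cs.inv_simple]; exact simple_conj_conj cs i t,
          eta_simple,
          if_neg (fun h => hts ((conj_simple_eq_simple_iff cs i t).mp h)), add_zero]
        exact (isLeftInversion_iff_eta cs ht w).mp htw
    · rintro (rfl | ⟨t', ht', rfl⟩)
      · exact ⟨cs.isReflection_simple i, hlen⟩
      · have hrefl' := ht'.1
        have hrefl : cs.IsReflection (cs.simple i * t' * cs.simple i) := by
          have := hrefl'.conj (cs.simple i)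
          rwa [cs.inv_simple] at this
        have ht's : t' ≠ cs.simple i := by
          intro hcon
          rw [hcon] at ht'
          have h2 := ht'.2
          rw [cs.simple_mul_simple_cancel_left] at h2
          omega
        rw [isLeftInversion_iff_eta cs hrefl,
          show w⁻¹ = (w⁻¹ * cs.simple i) * cs.simple i from by
            rw [mul_assoc, cs.simple_mul_simple_self, mul_one],
          eta_mul,
          show cs.simple i * (cs.simple i * t' * cs.simple i) * (cs.simple i)⁻¹ = t' from by
            rw [cs.inv_simple]; exact simple_conj_conj cs i t',
          eta_simple,
          if_neg (fun h => ht's ((conj_simple_eq_simple_iff cs i t').mp h)), add_zero,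
          show w⁻¹ * cs.simple i = (cs.simple i * w)⁻¹ from by
            rw [mul_inv_rev, cs.inv_simple]]
        exact (isLeftInversion_iff_eta cs hrefl' (cs.simple i * w)).mp ht'
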